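/- Let l be an affine line in the Euclidean plane ℝ², P a point on l, and F a point not on l. Let F_mr be the reflection of F across l (so F_mr ≠ P). Let F₁ be any point with F₁ ≠ P, and let F₂ be the reflection of F₁ across the line m through P and F_mr. Then: (i) dist(P,F₂) = dist(P,F₁); (ii) dist(F_mr,F₂) = dist(F_mr,F₁); and (iii) setting n₁ = (P−F)/‖P−F‖ + (P−F₁)/‖P−F₁‖, n₂ = (P−F)/‖P−F‖ + (P−F₂)/‖P−F₂‖, and n₁' = (reflection of the point P + n₁ across l) − P, the vectors n₁' and n₂ are linearly dependent. (n₁, resp. n₂, is a normal vector at P of the ellipse through P with foci F,F₁, resp. F,F₂, of the same major-axis length dist(P,F)+dist(P,F₁); so (iii) says the reflection across l carries the tangent line at P of the incoming Kepler flight ellipse to the tangent line at P of the outgoing one. This is the Gallavotti–Jauslin theorem: under elastic reflection of a Kepler orbit at the line l, the new second focus F₂ lies on the circle centered at F_mr of radius dist(F_mr,F₁).) -/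

import Mathlib

open RealInnerProductSpace

lemma det2_not_linIndep (x y : EuclideanSpace ℝ (Fin 2))
    (h : x 0 * y 1 - x 1 * y 0 = 0) : ¬ LinearIndependent ℝ ![x, y] := by
  intro hli
  rw [LinearIndependent.pair_iff] at hli
  have h1 := hli (y 1) (-(x 1)) (by
    ext i
    fin_cases i
    · show y 1 * x 0 + -(x 1) * y 0 = 0
      linear_combination h
    · show y 1 * x 1 + -(x 1) * y 1 = 0
      ring)
  have h0 := hli (y 0) (-(x 0)) (by
    ext i
    fin_cases i
    · show y 0 * x 0 + -(x 0) * y 0 = 0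
      ring
    · show y 0 * x 1 + -(x 0) * y 1 = 0
      linear_combination -h)
  have hx : x = 0 := by
    ext i
    fin_cases i
    · simpa using h0.2
    · simpa using h1.2
  have := hli 1 0 (by simp [hx])
  exact one_ne_zero this.1

lemma refl_vadd (s : AffineSubspace ℝ (EuclideanSpace ℝ (Fin 2))) [Nonempty s]
    [s.direction.HasOrthogonalProjection] {p : EuclideanSpace ℝ (Fin 2)} (hp : p ∈ s)
    (w : EuclideanSpace ℝ (Fin 2)) :
    EuclideanGeometry.reflection s (w + p) = Submodule.reflection s.direction w + p := by
  rw [EuclideanGeometry.reflection_apply_of_mem _ _ hp, vsub_eq_sub, add_sub_cancel_right,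
    vadd_eq_add]

set_option maxHeartbeats 1600000 in
theorem gallavotti_jauslin
    (l : AffineSubspace ℝ (EuclideanSpace ℝ (Fin 2))) [Nonempty l]

    (hl : Module.finrank ℝ l.direction = 1)
    (P F : EuclideanSpace ℝ (Fin 2)) (hP : P ∈ l) (hF : F ∉ l)
    (Fmr : EuclideanSpace ℝ (Fin 2)) (hFmr : Fmr = EuclideanGeometry.reflection l F)
    (F₁ : EuclideanSpace ℝ (Fin 2)) (hF₁ : F₁ ≠ P)
    (F₂ : EuclideanSpace ℝ (Fin 2))
    (hF₂ : F₂ = EuclideanGeometry.reflection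
      (affineSpan ℝ ({P, Fmr} : Set (EuclideanSpace ℝ (Fin 2)))) F₁)
    (n₁ n₂ n₁' : EuclideanSpace ℝ (Fin 2))
    (hn₁ : n₁ = ‖P - F‖⁻¹ • (P - F) + ‖P - F₁‖⁻¹ • (P - F₁))
    (hn₂ : n₂ = ‖P - F‖⁻¹ • (P - F) + ‖P - F₂‖⁻¹ • (P - F₂))
    (hn₁' : n₁' = EuclideanGeometry.reflection l (P + n₁) - P) :
    Fmr ≠ P ∧
    dist P F₂ = dist P F₁ ∧
    dist Fmr F₂ = dist Fmr F₁ ∧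
    ¬ LinearIndependent ℝ ![n₁', n₂] := by
  have hPm : P ∈ affineSpan ℝ ({P, Fmr} : Set (EuclideanSpace ℝ (Fin 2))) :=
    mem_affineSpan ℝ (Set.mem_insert _ _)
  have hFmrm : Fmr ∈ affineSpan ℝ ({P, Fmr} : Set (EuclideanSpace ℝ (Fin 2))) :=
    mem_affineSpan ℝ (by simp)
  -- (i)
  have hFmr_ne : Fmr ≠ P := by
    intro hEq
    apply hF
    have h1 : EuclideanGeometry.reflection l F = P := by rw [← hFmr, hEq]
    have h2 : F = EuclideanGeometry.reflection l P := by
      rw [← h1, EuclideanGeometry.reflection_reflection]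
    rw [h2, (EuclideanGeometry.reflection_eq_self_iff P).mpr hP]
    exact hP
  -- (ii)
  have hPF2 : dist P F₂ = dist P F₁ := by
    rw [hF₂, EuclideanGeometry.dist_reflection_eq_of_mem _ hPm]
  have hFmrF2 : dist Fmr F₂ = dist Fmr F₁ := by
    rw [hF₂, EuclideanGeometry.dist_reflection_eq_of_mem _ hFmrm]
  refine ⟨hFmr_ne, hPF2, hFmrF2, ?_⟩
  -- notation
  set a : ℝ := ‖P - F‖ with haDef
  set b : ℝ := ‖P - F₁‖ with hbDef
  have hFP : F ≠ P := fun h => hF (h ▸ hP)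
  have hane : a ≠ 0 := norm_ne_zero_iff.mpr (sub_ne_zero.mpr (fun h => hFP h.symm))
  have hbne : b ≠ 0 := norm_ne_zero_iff.mpr (sub_ne_zero.mpr (fun h => hF₁ h.symm))
  -- unit direction of l
  obtain ⟨u, hune, hdiru⟩ : ∃ u : EuclideanSpace ℝ (Fin 2), u ≠ 0 ∧ l.direction = ℝ ∙ u := by
    obtain ⟨v, hv0, hvs⟩ := (finrank_eq_one_iff' ).mp hl
    have hvne : (v : EuclideanSpace ℝ (Fin 2)) ≠ 0 := by simpa using hv0
    refine ⟨v, hvne, le_antisymm ?_ ?_⟩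
    · intro w hw
      obtain ⟨c, hc⟩ := hvs ⟨w, hw⟩
      exact Submodule.mem_span_singleton.mpr ⟨c, congrArg Subtype.val hc⟩
    · rw [Submodule.span_singleton_le_iff_mem]
      exact v.2
  obtain ⟨e, hev, hdir⟩ : ∃ e : EuclideanSpace ℝ (Fin 2), ‖e‖ = 1 ∧ l.direction = ℝ ∙ e := by
    refine ⟨‖u‖⁻¹ • u, ?_, ?_⟩
    · rw [norm_smul, norm_inv, norm_norm, inv_mul_cancel₀ (norm_ne_zero_iff.mpr hune)]
    · rw [hdiru]
      exact (Submodule.span_singleton_smul_eq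
        ((isUnit_iff_ne_zero).mpr (inv_ne_zero (norm_ne_zero_iff.mpr hune))) _).symm
  -- linear reflection across l.direction
  have hSl : ∀ w : EuclideanSpace ℝ (Fin 2),
      Submodule.reflection l.direction w = (2 * ⟪e, w⟫) • e - w := by
    intro w
    have : Submodule.HasOrthogonalProjection (ℝ ∙ e) := by rw [← hdir]; infer_instance
    rw [show Submodule.reflection l.direction w = Submodule.reflection (ℝ ∙ e) w from by
      congr 1 <;> rw [hdir]]
    rw [Submodule.reflection_apply, Submodule.starProjection_singleton ℝ, hev]
    simp only [one_pow, div_one]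
    module
  -- reflection across l at arbitrary points
  have hrefl_l : ∀ x : EuclideanSpace ℝ (Fin 2),
      EuclideanGeometry.reflection l x = ((2 * ⟪e, x - P⟫) • e - (x - P)) + P := by
    intro x
    have hx : x = (x - P) + P := by abel
    rw [show EuclideanGeometry.reflection l x
        = EuclideanGeometry.reflection l ((x - P) + P) from by rw [← hx]]
    rw [refl_vadd l hP, hSl]
  -- the reflected focus
  set g : EuclideanSpace ℝ (Fin 2) := (2 * ⟪e, P - F⟫) • e - (P - F) with hgDef
  have hg : P - Fmr = g := by
    rw [hFmr, hrefl_l F]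
    have h4 : F - P = -(P - F) := by abel
    rw [h4, inner_neg_right]
    rw [hgDef]
    simp only [mul_neg, neg_smul]
    module
  have hga : ‖g‖ = a := by
    rw [← hg, haDef, ← dist_eq_norm, ← dist_eq_norm, hFmr,
      EuclideanGeometry.dist_reflection_eq_of_mem _ hP]
  -- direction of m
  have hdirm : (affineSpan ℝ ({P, Fmr} : Set (EuclideanSpace ℝ (Fin 2)))).direction
      = ℝ ∙ g := by
    rw [direction_affineSpan, vectorSpan_pair, ← hg]
    rfl
  have hgne : g ≠ 0 := by rw [← hg]; exact sub_ne_zero.mpr (fun h => hFmr_ne h.symm)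
  have hSm : ∀ w : EuclideanSpace ℝ (Fin 2),
      Submodule.reflection (affineSpan ℝ ({P, Fmr} : Set (EuclideanSpace ℝ (Fin 2)))).direction w
        = (2 * (⟪g, w⟫ / a ^ 2)) • g - w := by
    intro w
    have : Submodule.HasOrthogonalProjection (ℝ ∙ g) := by rw [← hdirm]; infer_instance
    rw [show Submodule.reflection (affineSpan ℝ ({P, Fmr} : Set (EuclideanSpace ℝ (Fin 2)))).direction w
        = Submodule.reflection (ℝ ∙ g) w from by simp only [hdirm]]
    rw [Submodule.reflection_apply, Submodule.starProjection_singleton ℝ, hga]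
    simp only [RCLike.ofReal_real_eq_id, id_eq]
    match_scalars <;> (field_simp; try ring)
  have hrefl_m : ∀ x : EuclideanSpace ℝ (Fin 2),
      EuclideanGeometry.reflection (affineSpan ℝ ({P, Fmr} : Set (EuclideanSpace ℝ (Fin 2)))) x
        = ((2 * (⟪g, x - P⟫ / a ^ 2)) • g - (x - P)) + P := by
    intro x
    have hx : x = (x - P) + P := by abel
    rw [show EuclideanGeometry.reflection (affineSpan ℝ ({P, Fmr} : Set (EuclideanSpace ℝ (Fin 2)))) x
        = EuclideanGeometry.reflection (affineSpan ℝ ({P, Fmr} : Set (EuclideanSpace ℝ (Fin 2)))) ((x - P) + P) from by rw [← hx]]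
    rw [refl_vadd _ hPm, hSm]
  -- second focus
  have hF₂' : P - F₂ = (2 * (⟪g, P - F₁⟫ / a ^ 2)) • g - (P - F₁) := by
    rw [hF₂, hrefl_m F₁]
    have h4 : F₁ - P = -(P - F₁) := by abel
    rw [h4, inner_neg_right]
    simp only [mul_neg, neg_div, neg_smul]
    module
  have hb2 : ‖P - F₂‖ = b := by
    rw [hbDef, ← dist_eq_norm, ← dist_eq_norm]
    exact hPF2
  -- normal vectors
  have hn1'v : n₁' = (2 * ⟪e, n₁⟫) • e - n₁ := by
    rw [hn₁', hrefl_l (P + n₁)]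
    have h5 : P + n₁ - P = n₁ := by abel
    rw [h5]
    abel
  have hn2v : n₂ = a⁻¹ • (P - F) + b⁻¹ • ((2 * (⟪g, P - F₁⟫ / a ^ 2)) • g - (P - F₁)) := by
    rw [hn₂, hb2, hF₂']
  -- scalar constraints
  have hee : e 0 ^ 2 + e 1 ^ 2 = 1 := by
    have h6 := real_inner_self_eq_norm_sq e
    rw [hev] at h6
    simp only [PiLp.inner_apply, RCLike.inner_apply, starRingEnd_apply, star_trivial,
      Fin.sum_univ_two, one_pow] at h6
    linear_combination h6
  have hpp : (P 0 - F 0) ^ 2 + (P 1 - F 1) ^ 2 = a ^ 2 := by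
    have h6 := real_inner_self_eq_norm_sq (P - F)
    simp only [PiLp.inner_apply, RCLike.inner_apply, starRingEnd_apply, star_trivial,
      Fin.sum_univ_two, PiLp.sub_apply] at h6
    rw [← haDef] at h6
    linear_combination h6
  have hqq : (P 0 - F₁ 0) ^ 2 + (P 1 - F₁ 1) ^ 2 = b ^ 2 := by
    have h6 := real_inner_self_eq_norm_sq (P - F₁)
    simp only [PiLp.inner_apply, RCLike.inner_apply, starRingEnd_apply, star_trivial,
      Fin.sum_univ_two, PiLp.sub_apply] at h6
    rw [← hbDef] at h6
    linear_combination h6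
  -- scaled components of the normal vectors
  have hX0 : a * b * n₁' 0 = (-1)*(P 0 - F₁ 0)*a + (-1)*(P 0 - F 0)*b + 2*e 0*e 1*(P 1 - F₁ 1)*a + 2*e 0*e 1*(P 1 - F 1)*b + 2*e 0^2*(P 0 - F₁ 0)*a + 2*e 0^2*(P 0 - F 0)*b := by
    rw [hn1'v, hn₁]
    simp only [PiLp.inner_apply, RCLike.inner_apply, starRingEnd_apply, star_trivial,
      Fin.sum_univ_two, PiLp.add_apply, PiLp.sub_apply, PiLp.smul_apply, smul_eq_mul]
    field_simp
    ring
  have hX1 : a * b * n₁' 1 = (-1)*(P 1 - F₁ 1)*a + (-1)*(P 1 - F 1)*b + 2*e 1^2*(P 1 - F₁ 1)*a + 2*e 1^2*(P 1 - F 1)*b + 2*e 0*e 1*(P 0 - F₁ 0)*a + 2*e 0*e 1*(P 0 - F 0)*b := by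
    rw [hn1'v, hn₁]
    simp only [PiLp.inner_apply, RCLike.inner_apply, starRingEnd_apply, star_trivial,
      Fin.sum_univ_two, PiLp.add_apply, PiLp.sub_apply, PiLp.smul_apply, smul_eq_mul]
    field_simp
    ring
  have hY0 : a^3 * b * n₂ 0 = (-1)*(P 0 - F₁ 0)*a^3 + (P 0 - F 0)*a^2*b + 2*(P 0 - F 0)*(P 1 - F 1)*(P 1 - F₁ 1)*a + 2*(P 0 - F 0)^2*(P 0 - F₁ 0)*a + (-4)*e 1^2*(P 0 - F 0)*(P 1 - F 1)*(P 1 - F₁ 1)*a + (-4)*e 0*e 1*(P 1 - F 1)^2*(P 1 - F₁ 1)*a + (-8)*e 0*e 1*(P 0 - F 0)*(P 1 - F 1)*(P 0 - F₁ 0)*a + (-4)*e 0*e 1*(P 0 - F 0)^2*(P 1 - F₁ 1)*a + 8*e 0*e 1^3*(P 1 - F 1)^2*(P 1 - F₁ 1)*a + (-4)*e 0^2*(P 0 - F 0)*(P 1 - F 1)*(P 1 - F₁ 1)*a + (-8)*e 0^2*(P 0 - F 0)^2*(P 0 - F₁ 0)*a + 8*e 0^2*e 1^2*(P 1 - F 1)^2*(P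 0 - F₁ 0)*a + 16*e 0^2*e 1^2*(P 0 - F 0)*(P 1 - F 1)*(P 1 - F₁ 1)*a + 16*e 0^3*e 1*(P 0 - F 0)*(P 1 - F 1)*(P 0 - F₁ 0)*a + 8*e 0^3*e 1*(P 0 - F 0)^2*(P 1 - F₁ 1)*a + 8*e 0^4*(P 0 - F 0)^2*(P 0 - F₁ 0)*a := by
    rw [hn2v, hgDef]
    simp only [PiLp.inner_apply, RCLike.inner_apply, starRingEnd_apply, star_trivial,
      Fin.sum_univ_two, PiLp.add_apply, PiLp.sub_apply, PiLp.smul_apply, smul_eq_mul]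
    field_simp
    ring
  have hY1 : a^3 * b * n₂ 1 = (-1)*(P 1 - F₁ 1)*a^3 + (P 1 - F 1)*a^2*b + 2*(P 1 - F 1)^2*(P 1 - F₁ 1)*a + 2*(P 0 - F 0)*(P 1 - F 1)*(P 0 - F₁ 0)*a + (-8)*e 1^2*(P 1 - F 1)^2*(P 1 - F₁ 1)*a + (-4)*e 1^2*(P 0 - F 0)*(P 1 - F 1)*(P 0 - F₁ 0)*a + 8*e 1^4*(P 1 - F 1)^2*(P 1 - F₁ 1)*a + (-4)*e 0*e 1*(P 1 - F 1)^2*(P 0 - F₁ 0)*a + (-8)*e 0*e 1*(P 0 - F 0)*(P 1 - F 1)*(P 1 - F₁ 1)*a + (-4)*e 0*e 1*(P 0 - F 0)^2*(P 0 - F₁ 0)*a + 8*e 0*e 1^3*(P 1 - F 1)^2*(P 0 - F₁ 0)*a + 16*e 0*e 1^3*(P 0 - F 0)*(P 1 - F 1)*(P 1 - F₁ 1)*a + (-4)*e 0^2*(P 0 - F 0)*(P 1 - F 1)*(P 0 - F₁ 0)*a + 16*e 0^2*e 1^2*(P 0 - F 0)*(P 1 - F 1)*(P 0 - F₁ 0)*a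 + 8*e 0^2*e 1^2*(P 0 - F 0)^2*(P 1 - F₁ 1)*a + 8*e 0^3*e 1*(P 0 - F 0)^2*(P 0 - F₁ 0)*a := by
    rw [hn2v, hgDef]
    simp only [PiLp.inner_apply, RCLike.inner_apply, starRingEnd_apply, star_trivial,
      Fin.sum_univ_two, PiLp.add_apply, PiLp.sub_apply, PiLp.smul_apply, smul_eq_mul]
    field_simp
    ring
  apply det2_not_linIndep
  have h7 : (a * b * n₁' 0) * (a^3 * b * n₂ 1) - (a * b * n₁' 1) * (a^3 * b * n₂ 0) = 0 := by
    rw [hX0, hX1, hY0, hY1]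
    linear_combination (2*(P 0 - F₁ 0)*(P 1 - F₁ 1)*a^4 + 2*(P 1 - F 1)*(P 0 - F₁ 0)*a^3*b + (-2)*(P 0 - F 0)*(P 1 - F₁ 1)*a^3*b + (-2)*(P 0 - F 0)*(P 1 - F 1)*a^2*b^2 + 4*(P 0 - F 0)*(P 1 - F 1)*(P 0 - F₁ 0)^2*a^2 + (-4)*(P 0 - F 0)^2*(P 0 - F₁ 0)*(P 1 - F₁ 1)*a^2 + (-8)*e 1^2*(P 1 - F 1)^2*(P 0 - F₁ 0)*(P 1 - F₁ 1)*a^2 + 8*e 1^2*(P 0 - F 0)*(P 1 - F 1)*(P 1 - F₁ 1)^2*a^2 + (-8)*e 0*e 1*(P 1 - F 1)^2*(P 0 - F₁ 0)^2*a^2 + 8*e 0*e 1*(P 0 - F 0)^2*(P 1 - F₁ 1)^2*a^2 + 8*e 0^2*(P 0 - F₁ 0)*(P 1 - F₁ 1)*a^4 + (-8)*e 0^2*(P 1 - F 1)^2*(P 0 - F₁ 0)*(P 1 - F₁ 1)*a^2 + (-8)*e 0^2*(P 0 - F 0)*(P 1 - F 1)*a^2*b^2 + 8*e 0^2*(P 0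 - F 0)*(P 1 - F 1)*(P 1 - F₁ 1)^2*a^2) * hee + ((-2)*(P 0 - F₁ 0)*(P 1 - F₁ 1)*a^2 + 2*e 0*e 1*a^2*b^2 + (-4)*e 0*e 1*(P 0 - F₁ 0)^2*a^2 + (-4)*e 0^2*(P 0 - F₁ 0)*(P 1 - F₁ 1)*a^2 + 8*e 0^2*e 1^2*(P 0 - F₁ 0)*(P 1 - F₁ 1)*a^2 + 8*e 0^4*(P 0 - F₁ 0)*(P 1 - F₁ 1)*a^2) * hpp + (2*(P 0 - F 0)*(P 1 - F 1)*a^2 + (-2)*e 0*e 1*a^4 + 4*e 0*e 1*(P 0 - F 0)^2*a^2 + 4*e 0^2*(P 0 - F 0)*(P 1 - F 1)*a^2 + (-8)*e 0^2*e 1^2*(P 0 - F 0)*(P 1 - F 1)*a^2 + (-8)*e 0^4*(P 0 - F 0)*(P 1 - F 1)*a^2) * hqq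
  have h8 : a^4 * b^2 * (n₁' 0 * n₂ 1 - n₁' 1 * n₂ 0) = 0 := by linear_combination h7
  have hM : (a^4 * b^2 : ℝ) ≠ 0 := mul_ne_zero (pow_ne_zero _ hane) (pow_ne_zero _ hbne)
  rcases mul_eq_zero.mp h8 with h' | h'
  · exact absurd h' hM
  · exact h'
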